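/- Let (α₁,α₂) be consistent Whitney parameters, set α₁* = α₁(1+√α₂)⁻¹, α₂* = √α₂ and α₁** = α₁[2(1+√α₂)α₂^{1/4}]⁻¹, α₂** = α₂^{1/4}, with W* and W** the corresponding Whitney boxes. Then for every (y,t) ∈ ℝ^{n+1}_+, W**(y,t) ⊆ ⋂_{(z,s)∈W**(y,t)} W*(z,s). -/

import Mathlib

open Metric Set

/-- The Whitney box with parameters (β₁, β₂) at the point q = (y,t). -/
def whitneyBox (n : ℕ) (β₁ β₂ : ℝ) (q : EuclideanSpace ℝ (Fin n) × ℝ) :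
    Set (EuclideanSpace ℝ (Fin n) × ℝ) :=
  {p | dist p.1 q.1 < β₁ * q.2 ∧ β₂⁻¹ * q.2 < p.2 ∧ p.2 < β₂ * q.2}

/-- with α₁* = α₁(1+√α₂)⁻¹, α₂* = √α₂,
α₁** = α₁[2(1+√α₂)α₂^{1/4}]⁻¹, α₂** = α₂^{1/4},
one has W**(y,t) ⊆ ⋂_{(z,s)∈W**(y,t)} W*(z,s). -/
theorem whitney_dstar_inter (n : ℕ) (α₁ α₂ : ℝ)
    (h1 : 0 < α₁) (h2 : α₁ < α₂⁻¹) (h3 : α₂⁻¹ < 1)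
    (y : EuclideanSpace ℝ (Fin n)) (t : ℝ) (ht : 0 < t) :
    whitneyBox n (α₁ * (2 * (1 + Real.sqrt α₂) * α₂ ^ ((1:ℝ)/4))⁻¹)
        (α₂ ^ ((1:ℝ)/4)) (y, t) ⊆
      ⋂ p ∈ whitneyBox n (α₁ * (2 * (1 + Real.sqrt α₂) * α₂ ^ ((1:ℝ)/4))⁻¹)
          (α₂ ^ ((1:ℝ)/4)) (y, t),
        whitneyBox n (α₁ * (1 + Real.sqrt α₂)⁻¹) (Real.sqrt α₂) p := by
  intro p hp
  rw [Set.mem_iInter₂]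
  intro q hq
  obtain ⟨hp1, hp2, hp3⟩ := hp
  obtain ⟨hq1, hq2, hq3⟩ := hq
  set s := Real.sqrt α₂ with hs
  set A := α₂ ^ ((1:ℝ)/4) with hAdef
  have hi : 0 < α₂⁻¹ := h1.trans h2
  have hα2 : 0 < α₂ := inv_pos.mp hi
  have hα2' : 1 < α₂ := by
    have := mul_inv_cancel₀ hα2.ne'
    nlinarith
  have hA : 1 < A := by
    rw [hAdef]
    exact Real.one_lt_rpow_iff_of_pos hα2 |>.mpr (Or.inl ⟨hα2', by norm_num⟩)
  have hA0 : 0 < A := zero_lt_one.trans hA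
  have hAA : A * A = s := by
    rw [hs, hAdef, ← Real.rpow_add hα2, Real.sqrt_eq_rpow]; norm_num
  have hs0 : 0 < s := Real.sqrt_pos.mpr hα2
  have hB : 0 < 1 + s := by linarith
  have hAi : A * A⁻¹ = 1 := mul_inv_cancel₀ hA0.ne'
  refine ⟨?_, ?_, ?_⟩
  · -- dist p.1 q.1 < α₁ * (1+s)⁻¹ * q.2
    have key : α₁ * (2 * (1 + s) * A)⁻¹ * t + α₁ * (2 * (1 + s) * A)⁻¹ * t
        = α₁ * (1 + s)⁻¹ * (A⁻¹ * t) := by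
      field_simp
      ring
    have hc0 : 0 < α₁ * (1 + s)⁻¹ := mul_pos h1 (inv_pos.mpr hB)
    calc dist p.1 q.1 ≤ dist p.1 y + dist q.1 y := dist_triangle_right p.1 q.1 y
      _ < α₁ * (2 * (1 + s) * A)⁻¹ * t + α₁ * (2 * (1 + s) * A)⁻¹ * t :=
          add_lt_add hp1 hq1
      _ = α₁ * (1 + s)⁻¹ * (A⁻¹ * t) := key
      _ < α₁ * (1 + s)⁻¹ * q.2 := by
          exact mul_lt_mul_of_pos_left hq2 hc0
  · -- s⁻¹ * q.2 < p.2
    have e : s⁻¹ * (A * t) = A⁻¹ * t := by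
      rw [← hAA]; field_simp
    calc s⁻¹ * q.2 < s⁻¹ * (A * t) := mul_lt_mul_of_pos_left hq3 (inv_pos.mpr hs0)
      _ = A⁻¹ * t := e
      _ < p.2 := hp2
  · -- p.2 < s * q.2
    have ht' : t < A * q.2 := by nlinarith
    calc p.2 < A * t := hp3
      _ < A * (A * q.2) := mul_lt_mul_of_pos_left ht' hA0
      _ = s * q.2 := by rw [← hAA]; ring
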